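/- Let A and H be groups, φ : A →* H an injective homomorphism, n : ℕ, and let G = Monoid.PushoutI (fun _ : Fin n => φ) be the star of isomorphic groups with n rays, with ray-permuting homomorphisms Φ σ : G →* G for σ : Equiv.Perm (Fin n). Assume that for every nontrivial a ∈ A the centralizer of base a in G is contained in the image of base, i.e. Subgroup.centralizer {base a} ≤ base.range. Suppose g ∈ G admits a reduced word datum of length l, h ∈ G is nontrivial and admits a reduced word datum of length m, and l + m ≥ 1. Then for every k : ℕ there exists a finset T of permutations of Fin n with T.card = (n − 2) / 2 (natural-number operations, i.e. ⌊(n−2)/2⌋) such that for all σ, τ ∈ T with σ ≠ τ, the pairs (Φ σ g, Φ σ h) and (Φ τ g, Φ τ h) are not related by the k-coset relation. -/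

import Mathlib

open Monoid

/-- A reduced word datum of length `l.length` for an element `g` of the star of isomorphic
groups `Monoid.PushoutI (fun _ : Fin n => φ)`. -/
def IsReducedDatum {A H : Type*} [Group A] [Group H] {n : ℕ} (φ : A →* H)
    (g : Monoid.PushoutI (fun _ : Fin n => φ)) (a : A) (l : List (Fin n × H)) : Prop :=
  (∀ p ∈ l, p.2 ∉ Set.range φ) ∧
  l.Chain' (fun p q => p.1 ≠ q.1) ∧
  g = Monoid.PushoutI.base (fun _ : Fin n => φ) a *
      (l.map fun p => Monoid.PushoutI.of (φ := fun _ : Fin n => φ) p.1 p.2).prod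

/-- The `k`-coset equivalence relation on pairs of elements of a group. -/
def CosetRel {G : Type*} [Group G] (k : ℕ) (p q : G × G) : Prop :=
  (p.2 = 1 ∧ q.2 = 1) ∨
    (p.2 ≠ 1 ∧ q.2 ≠ 1 ∧ ∃ b : G,
      Subgroup.centralizer {p.2} = Subgroup.zpowers b ∧
      Subgroup.centralizer {q.2} = Subgroup.zpowers b ∧
      p.1⁻¹ * q.1 ∈ Subgroup.zpowers (b ^ k))

namespace StarAux

variable {A H : Type*} [Group A] [Group H] {n : ℕ} {φ : A →* H}

def datumWord (l : List (Fin n × H)) (hmem : ∀ p ∈ l, p.2 ∉ Set.range φ)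
    (hch : l.Chain' (fun p q => p.1 ≠ q.1)) :
    Monoid.CoprodI.Word (fun _ : Fin n => H) where
  toList := l.map fun p => ⟨p.1, p.2⟩
  ne_one := by
    intro x hx
    simp only [List.mem_map] at hx
    obtain ⟨p, hp, rfl⟩ := hx
    intro h1
    apply hmem p hp
    have : p.2 = 1 := h1
    rw [this]
    exact ⟨1, by simp⟩
  chain_ne := by
    rw [List.isChain_map]
    exact hch

theorem datumWord_prod (l : List (Fin n × H)) (hmem : ∀ p ∈ l, p.2 ∉ Set.range φ)
    (hch : l.Chain' (fun p q => p.1 ≠ q.1)) :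
    Monoid.PushoutI.ofCoprodI (Monoid.CoprodI.Word.prod (datumWord (φ := φ) l hmem hch)) =
      (l.map fun p => Monoid.PushoutI.of (φ := fun _ : Fin n => φ) p.1 p.2).prod := by
  rw [Monoid.CoprodI.Word.prod, map_list_prod]
  simp [datumWord, List.map_map, Function.comp_def, Monoid.PushoutI.ofCoprodI_of]

/-- Uniqueness of the index sequence of a reduced datum. -/
theorem fst_unique (hφ : Function.Injective φ) (g : Monoid.PushoutI (fun _ : Fin n => φ))
    {a₁ a₂ : A} {l₁ l₂ : List (Fin n × H)}
    (h₁ : IsReducedDatum φ g a₁ l₁) (h₂ : IsReducedDatum φ g a₂ l₂) :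
    l₁.map Prod.fst = l₂.map Prod.fst := by
  classical
  obtain ⟨hm₁, hc₁, hp₁⟩ := h₁
  obtain ⟨hm₂, hc₂, hp₂⟩ := h₂
  obtain ⟨d⟩ := PushoutI.NormalWord.transversal_nonempty (φ := fun _ : Fin n => φ) (fun _ => hφ)
  have hred₁ : Monoid.PushoutI.Reduced (fun _ : Fin n => φ) (datumWord (φ := φ) l₁ hm₁ hc₁) := by
    intro x hx
    simp only [datumWord, List.mem_map] at hx
    obtain ⟨p, hp, rfl⟩ := hx
    intro hr
    exact hm₁ p hp (by rwa [← MonoidHom.coe_range])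
  have hred₂ : Monoid.PushoutI.Reduced (fun _ : Fin n => φ) (datumWord (φ := φ) l₂ hm₂ hc₂) := by
    intro x hx
    simp only [datumWord, List.mem_map] at hx
    obtain ⟨p, hp, rfl⟩ := hx
    intro hr
    exact hm₂ p hp (by rwa [← MonoidHom.coe_range])
  obtain ⟨w₁, hw₁prod, hw₁map⟩ := hred₁.exists_normalWord_prod_eq d
  obtain ⟨w₂, hw₂prod, hw₂map⟩ := hred₂.exists_normalWord_prod_eq d
  have hprod : (a₁ • w₁).prod = (a₂ • w₂).prod := by
    rw [Monoid.PushoutI.NormalWord.prod_base_smul, Monoid.PushoutI.NormalWord.prod_base_smul,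
      hw₁prod, hw₂prod, datumWord_prod, datumWord_prod, ← hp₁, ← hp₂]
  have heq : a₁ • w₁ = a₂ • w₂ := Monoid.PushoutI.NormalWord.prod_injective hprod
  have hlist : w₁.toList = w₂.toList := by
    have := congrArg (fun w : Monoid.PushoutI.NormalWord d => w.toList) heq
    simpa [Monoid.PushoutI.NormalWord.base_smul_def'] using this
  have hmapfst : ∀ (l : List (Fin n × H)),
      ((l.map fun p => (⟨p.1, p.2⟩ : Σ _ : Fin n, H)).map Sigma.fst) = l.map Prod.fst := by
    intro l; rw [List.map_map]; rfl
  have key : ((datumWord (φ := φ) l₁ hm₁ hc₁).toList.map Sigma.fst)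
      = ((datumWord (φ := φ) l₂ hm₂ hc₂).toList.map Sigma.fst) := by
    rw [← hw₁map, ← hw₂map, hlist]
  simpa only [datumWord, hmapfst] using key

theorem base_datum (c : A) :
    IsReducedDatum φ (Monoid.PushoutI.base (fun _ : Fin n => φ) c) c [] :=
  ⟨by simp, List.isChain_nil, by simp⟩

theorem nil_of_mem_range (hφ : Function.Injective φ)
    {g : Monoid.PushoutI (fun _ : Fin n => φ)} {a : A} {l : List (Fin n × H)}
    (h : IsReducedDatum φ g a l)
    (hg : g ∈ (Monoid.PushoutI.base (fun _ : Fin n => φ)).range) : l = [] := by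
  obtain ⟨c, rfl⟩ := hg
  have := fst_unique hφ _ h (base_datum c)
  simpa using this

theorem mul_datum {g₁ g₂ : Monoid.PushoutI (fun _ : Fin n => φ)} {a₁ a₂ : A}
    {l₁ : List (Fin n × H)} {q : Fin n × H} {l₂ : List (Fin n × H)}
    (h₁ : IsReducedDatum φ g₁ a₁ l₁) (h₂ : IsReducedDatum φ g₂ a₂ (q :: l₂))
    (hj : ∀ r ∈ l₁.getLast?, r.1 ≠ q.1) :
    IsReducedDatum φ (g₁ * g₂) a₁ (l₁ ++ (q.1, φ a₂ * q.2) :: l₂) := by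
  obtain ⟨hm₁, hc₁, hp₁⟩ := h₁
  obtain ⟨hm₂, hc₂, hp₂⟩ := h₂
  refine ⟨?_, ?_, ?_⟩
  · intro r hr
    rcases List.mem_append.1 hr with hr | hr
    · exact hm₁ r hr
    · rcases List.mem_cons.1 hr with rfl | hr
      · rintro ⟨c, hc⟩
        apply hm₂ q List.mem_cons_self
        exact ⟨a₂⁻¹ * c, by rw [map_mul, hc]; simp [map_inv]⟩
      · exact hm₂ r (List.mem_cons_of_mem _ hr)
  · change List.IsChain _ _
    rw [List.isChain_append]
    refine ⟨hc₁, ?_, ?_⟩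
    · rcases List.isChain_cons.1 hc₂ with ⟨hhead, htail⟩
      exact List.isChain_cons.2 ⟨hhead, htail⟩
    · intro r hr y hy
      simp only [List.head?_cons, Option.mem_def, Option.some.injEq] at hy
      subst hy
      exact hj r hr
  · have hkey : Monoid.PushoutI.base (fun _ : Fin n => φ) a₂ *
        Monoid.PushoutI.of (φ := fun _ : Fin n => φ) q.1 q.2 =
        Monoid.PushoutI.of (φ := fun _ : Fin n => φ) q.1 (φ a₂ * q.2) := by
      rw [map_mul, Monoid.PushoutI.of_apply_eq_base]
    rw [hp₁, hp₂, List.map_append, List.prod_append, List.map_cons, List.prod_cons,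
      List.map_cons, List.prod_cons, ← mul_assoc, mul_assoc _ _ (Monoid.PushoutI.base _ a₂),
      mul_assoc (Monoid.PushoutI.base _ a₁)]
    simp only [← mul_assoc, hkey]
    simp [mul_assoc]
    exact (Monoid.PushoutI.of_apply_eq_base (fun _ : Fin n => φ) q.1 a₂).symm

theorem inv_mul_datum {g₁ g₂ : Monoid.PushoutI (fun _ : Fin n => φ)} {a : A}
    {l₁ l₂ : List (Fin n × H)}
    (h₁ : IsReducedDatum φ g₁ a l₁) (h₂ : IsReducedDatum φ g₂ a l₂)
    (hj : ∀ r ∈ l₁.head?, ∀ s ∈ l₂.head?, r.1 ≠ s.1) :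
    IsReducedDatum φ (g₁⁻¹ * g₂) 1 ((l₁.reverse.map fun p => (p.1, p.2⁻¹)) ++ l₂) := by
  obtain ⟨hm₁, hc₁, hp₁⟩ := h₁
  obtain ⟨hm₂, hc₂, hp₂⟩ := h₂
  refine ⟨?_, ?_, ?_⟩
  · intro r hr
    rcases List.mem_append.1 hr with hr | hr
    · simp only [List.mem_map, List.mem_reverse] at hr
      obtain ⟨p, hp, rfl⟩ := hr
      rintro ⟨c, hc⟩
      apply hm₁ p hp
      exact ⟨c⁻¹, by rw [map_inv, hc]; simp⟩
    · exact hm₂ r hr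
  · change List.IsChain _ _
    rw [List.isChain_append]
    refine ⟨?_, hc₂, ?_⟩
    · rw [List.isChain_map, List.isChain_reverse]
      exact hc₁.imp fun a b hab => Ne.symm hab
    · intro r hr s hs
      rw [List.getLast?_map, List.getLast?_reverse] at hr
      simp only [Option.mem_def, Option.map_eq_some_iff] at hr
      obtain ⟨p, hp, rfl⟩ := hr
      exact hj p hp s hs
  · have hinv : ((l₁.map fun p =>
        Monoid.PushoutI.of (φ := fun _ : Fin n => φ) p.1 p.2).prod)⁻¹ =
        (((l₁.reverse.map fun p => (p.1, p.2⁻¹)).map fun p =>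
          Monoid.PushoutI.of (φ := fun _ : Fin n => φ) p.1 p.2).prod) := by
      rw [List.prod_inv_reverse]
      simp [List.map_map, Function.comp_def, List.map_reverse]
    rw [hp₁, hp₂, List.map_append, List.prod_append, ← hinv]
    simp [mul_assoc]

theorem map_datum (σ : Equiv.Perm (Fin n)) {g : Monoid.PushoutI (fun _ : Fin n => φ)}
    {a : A} {l : List (Fin n × H)} (h : IsReducedDatum φ g a l)
    (Φσ : Monoid.PushoutI (fun _ : Fin n => φ) →* Monoid.PushoutI (fun _ : Fin n => φ))
    (hof : ∀ i x, Φσ (Monoid.PushoutI.of (φ := fun _ : Fin n => φ) i x) =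
      Monoid.PushoutI.of (φ := fun _ : Fin n => φ) (σ i) x)
    (hbase : ∀ c, Φσ (Monoid.PushoutI.base (fun _ : Fin n => φ) c) =
      Monoid.PushoutI.base (fun _ : Fin n => φ) c) :
    IsReducedDatum φ (Φσ g) a (l.map fun p => (σ p.1, p.2)) := by
  obtain ⟨hm, hc, hp⟩ := h
  refine ⟨?_, ?_, ?_⟩
  · intro r hr
    simp only [List.mem_map] at hr
    obtain ⟨p, hp', rfl⟩ := hr
    exact hm p hp'
  · change List.IsChain _ _
    rw [List.isChain_map]
    exact hc.imp fun a b hab => by simpa using σ.injective.ne hab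
  · rw [hp, map_mul, hbase, map_list_prod, List.map_map, List.map_map]
    have hmc : (l.map ((⇑Φσ) ∘ fun p => Monoid.PushoutI.of (φ := fun _ : Fin n => φ) p.1 p.2)) =
        l.map ((fun p => Monoid.PushoutI.of (φ := fun _ : Fin n => φ) p.1 p.2) ∘
          fun p => (σ p.1, p.2)) :=
      List.map_congr_left (fun p _ => hof p.1 p.2)
    rw [hmc]

/-- A permutation sending `x` to `a` and `y` to `b`. -/
def pairPerm {α : Type*} [DecidableEq α] (x y a b : α) : Equiv.Perm α :=
  (Equiv.swap x a).trans (Equiv.swap ((Equiv.swap x a) y) b)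

theorem pairPerm_snd {α : Type*} [DecidableEq α] (x y a b : α) : pairPerm x y a b y = b := by
  simp [pairPerm]

theorem pairPerm_fst {α : Type*} [DecidableEq α] {x y a b : α} (hxy : x ≠ y) (hab : a ≠ b) :
    pairPerm x y a b x = a := by
  have h1 : a ≠ (Equiv.swap x a) y := by
    intro hc
    apply hxy
    have := (Equiv.swap x a).injective ((Equiv.swap_apply_left x a).trans hc)
    exact this
  simp only [pairPerm, Equiv.trans_apply, Equiv.swap_apply_left]
  exact Equiv.swap_apply_of_ne_of_ne h1 hab

theorem exists_perms (n t : ℕ) (ht2 : 2 * t ≤ n) (x y : Fin n) :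
    ∃ f : Fin t → Equiv.Perm (Fin n),
      (∀ j j', j ≠ j' → f j x ≠ f j' x) ∧ (∀ j j', j ≠ j' → f j y ≠ f j' x) := by
  by_cases hxy : x = y
  · subst hxy
    refine ⟨fun j => pairPerm x x ⟨2 * j.1, by have := j.2; omega⟩ ⟨2 * j.1, by have := j.2; omega⟩,
      ?_, ?_⟩ <;>
    · intro j j' hjj'
      rw [pairPerm_snd, pairPerm_snd]
      intro hc
      apply hjj'
      have : (2 : ℕ) * j.1 = 2 * j'.1 := congrArg Fin.val hc
      exact Fin.ext (by omega)
  · refine ⟨fun j => pairPerm x y ⟨2 * j.1, by have := j.2; omega⟩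
      ⟨2 * j.1 + 1, by have := j.2; omega⟩, ?_, ?_⟩
    · intro j j' hjj'
      rw [pairPerm_fst hxy (Fin.ne_of_val_ne (by simp only [Fin.val_mk]; omega)),
        pairPerm_fst hxy (Fin.ne_of_val_ne (by simp only [Fin.val_mk]; omega))]
      intro hc
      apply hjj'
      have : (2 : ℕ) * j.1 = 2 * j'.1 := congrArg Fin.val hc
      exact Fin.ext (by omega)
    · intro j j' hjj'
      rw [pairPerm_snd,
        pairPerm_fst hxy (Fin.ne_of_val_ne (by simp only [Fin.val_mk]; omega))]
      intro hc
      have : (2 : ℕ) * j.1 + 1 = 2 * j'.1 := congrArg Fin.val hc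
      omega

end StarAux


/-- Lemma 3.3 (OrbitsCosets): in a star of isomorphic groups with `n` rays, in which
centralizers of nontrivial elements of the amalgamated subgroup lie in the amalgamated
subgroup, the orbit of a pair `(g, h)` (with `h ≠ 1`, both given by reduced words whose
lengths sum to at least 1) under the ray-permuting automorphisms meets at least
`⌊(n-2)/2⌋` many `k`-cosets, for every `k`. -/
theorem orbits_cosets {A H : Type*} [Group A] [Group H] (φ : A →* H)
    (hφ : Function.Injective φ) (n : ℕ)
    (Φ : Equiv.Perm (Fin n) →
      (Monoid.PushoutI (fun _ : Fin n => φ) →* Monoid.PushoutI (fun _ : Fin n => φ)))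
    (hΦ : ∀ (σ : Equiv.Perm (Fin n)) (i : Fin n),
      (Φ σ).comp (Monoid.PushoutI.of (φ := fun _ : Fin n => φ) i) =
        Monoid.PushoutI.of (φ := fun _ : Fin n => φ) (σ i))
    (hcent : ∀ a : A, a ≠ 1 →
      Subgroup.centralizer {Monoid.PushoutI.base (fun _ : Fin n => φ) a} ≤
        (Monoid.PushoutI.base (fun _ : Fin n => φ)).range)
    (g h : Monoid.PushoutI (fun _ : Fin n => φ))
    (ag ah : A) (lg lh : List (Fin n × H)) (l m : ℕ)
    (hlg : lg.length = l) (hlh : lh.length = m)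
    (hredg : IsReducedDatum φ g ag lg) (hredh : IsReducedDatum φ h ah lh)
    (hh : h ≠ 1) (hlm : 1 ≤ l + m) :
    ∀ k : ℕ, ∃ T : Finset (Equiv.Perm (Fin n)), T.card = (n - 2) / 2 ∧
      ∀ σ ∈ T, ∀ τ ∈ T, σ ≠ τ →
        ¬ CosetRel k (Φ σ g, Φ σ h) (Φ τ g, Φ τ h) := by
  intro k
  classical
  rcases Nat.eq_zero_or_pos n with hn0 | hn
  · exfalso
    cases lg with
    | cons p _ => exact absurd p.1.2 (by omega)
    | nil =>
      cases lh with
      | cons p _ => exact absurd p.1.2 (by omega)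
      | nil => simp at hlg hlh; omega
  · have hΦof : ∀ (σ : Equiv.Perm (Fin n)) (i : Fin n) (x : H),
        Φ σ (Monoid.PushoutI.of (φ := fun _ : Fin n => φ) i x) =
          Monoid.PushoutI.of (φ := fun _ : Fin n => φ) (σ i) x :=
      fun σ i x => DFunLike.congr_fun (hΦ σ i) x
    have hΦbase : ∀ (σ : Equiv.Perm (Fin n)) (c : A),
        Φ σ (Monoid.PushoutI.base (fun _ : Fin n => φ) c) =
          Monoid.PushoutI.base (fun _ : Fin n => φ) c := by
      intro σ c
      rw [← Monoid.PushoutI.of_apply_eq_base (fun _ : Fin n => φ) ⟨0, hn⟩ c, hΦof,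
        Monoid.PushoutI.of_apply_eq_base, Monoid.PushoutI.of_apply_eq_base]
    have ht2 : 2 * ((n - 2) / 2) ≤ n := by
      have := Nat.div_mul_le_self (n - 2) 2
      omega
    cases lh with
    | nil =>
      -- `h` is in the amalgamated subgroup
      have hl1 : lg ≠ [] := by
        intro hnil
        subst hnil
        simp at hlg hlh
        omega
      obtain ⟨p, lg', rfl⟩ : ∃ p lg', lg = p :: lg' := by
        cases lg with
        | nil => exact absurd rfl hl1
        | cons p t => exact ⟨p, t, rfl⟩
      obtain ⟨f, hP1, hP2⟩ := StarAux.exists_perms n ((n - 2) / 2) ht2 p.1 p.1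
      have hfinj : Function.Injective f := by
        intro j j' hjj'
        by_contra hne
        exact hP1 j j' hne (by rw [hjj'])
      refine ⟨Finset.image f Finset.univ, by
        rw [Finset.card_image_of_injective _ hfinj, Finset.card_univ, Fintype.card_fin], ?_⟩
      intro σ hσ τ hτ hst hrel
      obtain ⟨j, -, rfl⟩ := Finset.mem_image.1 hσ
      obtain ⟨j', -, rfl⟩ := Finset.mem_image.1 hτ
      have hjj' : j ≠ j' := fun e => hst (by rw [e])
      have hbh : h = Monoid.PushoutI.base (fun _ : Fin n => φ) ah := by
        simpa using hredh.2.2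
      have hah : ah ≠ 1 := by
        intro h1
        apply hh
        rw [hbh, h1, map_one]
      have hΦh : ∀ ρ : Equiv.Perm (Fin n), Φ ρ h = h := fun ρ => by rw [hbh, hΦbase, ← hbh]
      rcases hrel with ⟨h1, -⟩ | ⟨-, -, b, hb1, -, hbz⟩
      · have h1' : Φ (f j) h = 1 := h1
        exact hh (by rwa [hΦh] at h1')
      · have hb1' : Subgroup.centralizer {h} = Subgroup.zpowers b := by
          have h' : Subgroup.centralizer {Φ (f j) h} = Subgroup.zpowers b := hb1
          rwa [hΦh] at h'
        have hbrange : b ∈ (Monoid.PushoutI.base (fun _ : Fin n => φ)).range := by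
          apply hcent ah hah
          rw [← hbh, hb1']
          exact Subgroup.mem_zpowers b
        obtain ⟨c, rfl⟩ := hbrange
        have hz : (Φ (f j) g)⁻¹ * Φ (f j') g ∈
            (Monoid.PushoutI.base (fun _ : Fin n => φ)).range := by
          have hz' : (Φ (f j) g)⁻¹ * Φ (f j') g ∈
              Subgroup.zpowers ((Monoid.PushoutI.base (fun _ : Fin n => φ) c) ^ k) := hbz
          obtain ⟨s, hs⟩ := Subgroup.mem_zpowers_iff.1 hz'
          exact ⟨(c ^ k) ^ s, by rw [map_zpow, map_pow, hs]⟩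
        have dσ := StarAux.map_datum (f j) hredg (Φ (f j)) (hΦof (f j)) (hΦbase (f j))
        have dτ := StarAux.map_datum (f j') hredg (Φ (f j')) (hΦof (f j')) (hΦbase (f j'))
        have dz := StarAux.inv_mul_datum dσ dτ (by
          simp only [List.map_cons, List.head?_cons, Option.mem_def, Option.some.injEq]
          rintro r rfl s rfl
          exact hP1 j j' hjj')
        have := StarAux.nil_of_mem_range hφ dz hz
        simp at this
    | cons q lh' =>
      obtain ⟨f, hP1, hP2⟩ := StarAux.exists_perms n ((n - 2) / 2) ht2 q.1
        ((q :: lh').getLast (List.cons_ne_nil q lh')).1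
      have hfinj : Function.Injective f := by
        intro j j' hjj'
        by_contra hne
        exact hP1 j j' hne (by rw [hjj'])
      refine ⟨Finset.image f Finset.univ, by
        rw [Finset.card_image_of_injective _ hfinj, Finset.card_univ, Fintype.card_fin], ?_⟩
      intro σ hσ τ hτ hst hrel
      obtain ⟨j, -, rfl⟩ := Finset.mem_image.1 hσ
      obtain ⟨j', -, rfl⟩ := Finset.mem_image.1 hτ
      have hjj' : j ≠ j' := fun e => hst (by rw [e])
      have dhσ := StarAux.map_datum (f j) hredh (Φ (f j)) (hΦof (f j)) (hΦbase (f j))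
      have dhτ := StarAux.map_datum (f j') hredh (Φ (f j')) (hΦof (f j')) (hΦbase (f j'))
      have hlast : ∀ ρ : Equiv.Perm (Fin n),
          (((q :: lh').map fun p => (ρ p.1, p.2)).getLast?) =
            some (ρ ((q :: lh').getLast (List.cons_ne_nil q lh')).1,
              ((q :: lh').getLast (List.cons_ne_nil q lh')).2) := by
        intro ρ
        rw [List.getLast?_map, List.getLast?_eq_getLast (List.cons_ne_nil q lh')]
        rfl
      rcases hrel with ⟨h1, -⟩ | ⟨-, -, b, hb1, hb2, -⟩
      · have h1' : Φ (f j) h = 1 := h1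
        have := StarAux.nil_of_mem_range hφ dhσ (by rw [h1']; exact ⟨1, map_one _⟩)
        simp at this
      · have hσb : Φ (f j) h ∈ Subgroup.zpowers b := by
          have hb1' : Subgroup.centralizer {Φ (f j) h} = Subgroup.zpowers b := hb1
          rw [← hb1']
          exact Subgroup.mem_centralizer_iff.2 (by
            rintro x hx
            rw [Set.mem_singleton_iff] at hx
            subst hx
            rfl)
        have hτb : Φ (f j') h ∈ Subgroup.zpowers b := by
          have hb2' : Subgroup.centralizer {Φ (f j') h} = Subgroup.zpowers b := hb2
          rw [← hb2']
          exact Subgroup.mem_centralizer_iff.2 (by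
            rintro x hx
            rw [Set.mem_singleton_iff] at hx
            subst hx
            rfl)
        obtain ⟨s, hs⟩ := Subgroup.mem_zpowers_iff.1 hσb
        obtain ⟨t', ht'⟩ := Subgroup.mem_zpowers_iff.1 hτb
        have hcomm : Φ (f j) h * Φ (f j') h = Φ (f j') h * Φ (f j) h := by
          rw [← hs, ← ht', ← zpow_add, ← zpow_add, add_comm]
        have d₁ := StarAux.mul_datum dhσ dhτ (by
          intro r hr
          rw [hlast (f j)] at hr
          simp only [Option.mem_def, Option.some.injEq] at hr
          subst hr
          exact hP2 j j' hjj')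
        have d₂ := StarAux.mul_datum dhτ dhσ (by
          intro r hr
          rw [hlast (f j')] at hr
          simp only [Option.mem_def, Option.some.injEq] at hr
          subst hr
          exact hP2 j' j hjj'.symm)
        rw [← hcomm] at d₂
        have hfst := StarAux.fst_unique hφ _ d₁ d₂
        have hhead : f j q.1 = f j' q.1 := by
          have := congrArg List.head? hfst
          simpa using this
        exact hP1 j j' hjj' hhead
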